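/- Let X be a compact metric space, f : X → X continuous, and x ∈ X with infinite orbit. If there exists a positive integer l and a point y such that f^{ln}(x) → y as n → ∞, then ω_f(x) = O_f(y) and f^l(y) = y. -/

import Mathlib

open Filter Topology

theorem stmt_6 {X : Type*} [MetricSpace X] [CompactSpace X]
    (f : X → X) (hf : Continuous f) (x : X)
    (hinf : (Set.range fun k => f^[k] x).Infinite)
    (l : ℕ) (hl : 0 < l) (y : X)
    (hconv : Filter.Tendsto (fun n => f^[l * n] x) Filter.atTop (𝓝 y)) :
    {z : X | ∃ φ : ℕ → ℕ, StrictMono φ ∧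
        Filter.Tendsto (fun k => f^[φ k] x) Filter.atTop (𝓝 z)} =
      (Set.range fun k => f^[k] y) ∧ f^[l] y = y := by
  have hfl : f^[l] y = y := by
    have h1 : Tendsto (fun n => f^[l * (n + 1)] x) atTop (𝓝 y) :=
      hconv.comp (tendsto_add_atTop_nat 1)
    have h2 : Tendsto (fun n => f^[l] (f^[l * n] x)) atTop (𝓝 (f^[l] y)) :=
      ((hf.iterate l).tendsto y).comp hconv
    have heq : (fun n => f^[l] (f^[l * n] x)) = fun n => f^[l * (n + 1)] x := by
      funext n
      rw [← Function.iterate_add_apply]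
      congr 1
      ring
    rw [heq] at h2
    exact tendsto_nhds_unique h2 h1
  refine ⟨Set.eq_of_subset_of_subset ?_ ?_, hfl⟩
  · -- ω-limit set ⊆ orbit of y
    rintro z ⟨φ, hφ, hz⟩
    -- find r < l achieved infinitely often by φ k % l
    have hfr : ∃ r, ∃ᶠ k in atTop, φ k % l = r := by
      by_contra h
      push_neg at h
      have h' : ∀ r ∈ Finset.range l, ∀ᶠ k in atTop, φ k % l ≠ r :=
        fun r _ => h r
      have h'' : ∀ᶠ k in atTop, ∀ r ∈ Finset.range l, φ k % l ≠ r :=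
        (Finset.range l).eventually_all.2 h'
      obtain ⟨k, hk⟩ := h''.exists
      exact hk (φ k % l) (Finset.mem_range.mpr (Nat.mod_lt _ hl)) rfl
    obtain ⟨r, hr⟩ := hfr
    obtain ⟨ψ, hψ, hψr⟩ := Filter.extraction_of_frequently_atTop hr
    set q : ℕ → ℕ := fun n => φ (ψ n) / l with hq_def
    have hq : Tendsto q atTop atTop := by
      apply tendsto_atTop_atTop.2
      intro b
      refine ⟨l * b, fun n hn => ?_⟩
      have h1 : l * b ≤ φ (ψ n) := le_trans hn ((hφ.comp hψ).le_apply)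
      exact (Nat.le_div_iff_mul_le hl).2 (by rw [mul_comm]; exact h1)
    have h2 : Tendsto (fun n => f^[r] (f^[l * q n] x)) atTop (𝓝 (f^[r] y)) :=
      ((hf.iterate r).tendsto y).comp (hconv.comp hq)
    have heq : (fun n => f^[r] (f^[l * q n] x)) = fun n => f^[φ (ψ n)] x := by
      funext n
      rw [← Function.iterate_add_apply]
      congr 1
      rw [add_comm, hq_def, ← hψr n, Nat.div_add_mod]
    rw [heq] at h2
    have h3 : Tendsto (fun n => f^[φ (ψ n)] x) atTop (𝓝 z) :=
      hz.comp hψ.tendsto_atTop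
    exact ⟨r, (tendsto_nhds_unique h3 h2).symm⟩
  · -- orbit of y ⊆ ω-limit set
    rintro z ⟨k, rfl⟩
    refine ⟨fun n => l * n + k, ?_, ?_⟩
    · intro a b hab
      have : l * a < l * b := (Nat.mul_lt_mul_left hl).2 hab
      simpa using Nat.add_lt_add_right this k
    · have h2 : Tendsto (fun n => f^[k] (f^[l * n] x)) atTop (𝓝 (f^[k] y)) :=
        ((hf.iterate k).tendsto y).comp hconv
      have heq : (fun n => f^[k] (f^[l * n] x)) = fun n => f^[l * n + k] x := by
        funext n
        rw [← Function.iterate_add_apply]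
        congr 1
        ring
      rwa [heq] at h2
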